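/- For real numbers a < b and y < a, the principal value integral ∫_a^b 1/(√((s−a)(b−s)) (s−y)) ds equals π/√((a−y)(b−y)); and for y > b it equals −π/√((y−a)(y−b)). -/

import Mathlib

open MeasureTheory intervalIntegral

section PVAux
open Real Set

lemma ftc_aux (c r : ℝ) (hr : 0 ≤ r) (hcr : r < |c|) :
    ∫ θ in (-(π/2))..(π/2), (c + r * Real.sin θ)⁻¹ =
      (2 / Real.sqrt (c^2 - r^2)) *
        (Real.arctan ((c + r) / Real.sqrt (c^2 - r^2)) +
         Real.arctan ((c - r) / Real.sqrt (c^2 - r^2))) := by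
  set K := Real.sqrt (c^2 - r^2) with hK
  have hc0 : c ≠ 0 := by intro h; rw [h] at hcr; simp at hcr; linarith
  have hsq : 0 < c^2 - r^2 := by nlinarith [sq_abs c, abs_nonneg c]
  have hK0 : 0 < K := Real.sqrt_pos.mpr hsq
  have hKne : K ≠ 0 := ne_of_gt hK0
  have hK2 : K^2 = c^2 - r^2 := Real.sq_sqrt hsq.le
  have hden : ∀ θ : ℝ, c + r * Real.sin θ ≠ 0 := by
    intro θ h
    have h1 : |r * Real.sin θ| ≤ r := by
      rw [abs_mul, abs_of_nonneg hr]
      nlinarith [Real.abs_sin_le_one θ, abs_nonneg (Real.sin θ)]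
    have : |c| ≤ r := by
      have : c = -(r * Real.sin θ) := by linarith
      rw [this, abs_neg]; exact h1
    linarith
  set H : ℝ → ℝ := fun θ => (2 / K) * Real.arctan ((c * Real.tan (θ / 2) + r) / K) with hH
  have key : ∀ θ ∈ Set.Icc (-(π/2)) (π/2), HasDerivAt H ((c + r * Real.sin θ)⁻¹) θ := by
    intro θ hθ
    have hpi := Real.pi_pos
    have hcos : Real.cos (θ / 2) ≠ 0 := by
      apply ne_of_gt
      apply Real.cos_pos_of_mem_Ioo
      constructor <;> [linarith [hθ.1]; linarith [hθ.2]]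
    have h1 : HasDerivAt (fun x : ℝ => Real.tan (x / 2)) (1 / Real.cos (θ/2)^2 * (1/2)) θ := by
      have := (Real.hasDerivAt_tan hcos).comp θ ((hasDerivAt_id θ).div_const 2)
      simpa [Function.comp_def] using this
    have h2 : HasDerivAt (fun x : ℝ => (c * Real.tan (x / 2) + r) / K)
        ((c * (1 / Real.cos (θ/2)^2 * (1/2))) / K) θ :=
      ((h1.const_mul c).add_const r).div_const K
    have h3 := ((Real.hasDerivAt_arctan ((c * Real.tan (θ/2) + r) / K)).comp θ h2).const_mul (2 / K)
    refine h3.congr_deriv ?_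
    symm
    have hsin2 : Real.sin θ = 2 * Real.sin (θ/2) * Real.cos (θ/2) := by
      rw [show θ = 2 * (θ/2) by ring, Real.sin_two_mul]; ring_nf
    have hpy : Real.sin (θ/2)^2 + Real.cos (θ/2)^2 = 1 := Real.sin_sq_add_cos_sq _
    have htan : Real.tan (θ/2) = Real.sin (θ/2) / Real.cos (θ/2) := Real.tan_eq_sin_div_cos _
    rw [htan, hsin2]
    have hd2 : c + r * (2 * Real.sin (θ/2) * Real.cos (θ/2)) ≠ 0 := by
      have := hden θ; rwa [hsin2] at this
    rw [inv_eq_one_div, div_eq_iff hd2]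
    field_simp
    linear_combination (Real.cos (θ/2)^2) * hK2 + (c^2) * hpy
  have hcont : Continuous fun θ : ℝ => (c + r * Real.sin θ)⁻¹ :=
    (continuous_const.add (continuous_const.mul Real.continuous_sin)).inv₀ hden
  have hpi := Real.pi_pos
  rw [integral_eq_sub_of_hasDerivAt (fun θ hθ => key θ (by
    rwa [Set.uIcc_of_le (by linarith : -(π/2) ≤ π/2)] at hθ)) (hcont.intervalIntegrable _ _)]
  simp only [hH]
  rw [show (π/2)/2 = π/4 by ring, show (-(π/2))/2 = -(π/4) by ring,
    Real.tan_pi_div_four, Real.tan_neg, Real.tan_pi_div_four,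
    show (c * -1 + r)/K = -((c-r)/K) by ring, Real.arctan_neg, mul_one]
  ring
lemma subst_aux (a b y : ℝ) (hab : a < b) (hy : y ∉ Set.Icc a b) :
    ∫ s in a..b, 1 / (Real.sqrt ((s - a) * (b - s)) * (s - y)) =
      ∫ θ in (-(π/2))..(π/2), ((a+b)/2 - y + (b-a)/2 * Real.sin θ)⁻¹ := by
  have hpi := Real.pi_pos
  set r : ℝ := (b - a) / 2 with hrdef
  set m : ℝ := (a + b) / 2 with hmdef
  have hr : 0 < r := by simp [hrdef]; linarith
  set g : ℝ → ℝ := fun s => 1 / (Real.sqrt ((s - a) * (b - s)) * (s - y)) with hg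
  set f : ℝ → ℝ := fun θ => m + r * Real.sin θ with hf
  have hfa : f (-(π/2)) = a := by simp [hf, hmdef, hrdef]; ring
  have hfb : f (π/2) = b := by simp [hf, hmdef, hrdef]; ring
  have hfd : ∀ θ : ℝ, HasDerivAt f (r * Real.cos θ) θ := fun θ =>
    ((Real.hasDerivAt_sin θ).const_mul r).const_add m
  have hmapsIcc : ∀ θ ∈ Set.Icc (-(π/2)) (π/2), f θ ∈ Set.Icc a b := by
    intro θ _
    constructor
    · have := Real.neg_one_le_sin θ; simp only [hf, hmdef, hrdef]; nlinarith
    · have := Real.sin_le_one θ; simp only [hf, hmdef, hrdef]; nlinarith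
  have himg : f '' Set.Ioo (-(π/2)) (π/2) = Set.Ioo a b := by
    ext s
    constructor
    · rintro ⟨θ, hθ, rfl⟩
      have h1 : Real.sin θ < 1 := by
        have := Real.strictMonoOn_sin (Set.mem_Icc.mpr ⟨hθ.1.le, hθ.2.le⟩)
          (Set.mem_Icc.mpr ⟨by linarith [hθ.1], le_refl _⟩) hθ.2
        simpa using this
      have h2 : -1 < Real.sin θ := by
        have := Real.strictMonoOn_sin (Set.mem_Icc.mpr ⟨le_refl _, by linarith [hθ.2]⟩)
          (Set.mem_Icc.mpr ⟨hθ.1.le, hθ.2.le⟩) hθ.1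
        simpa using this
      constructor
      · simp only [hf, hmdef, hrdef]; nlinarith
      · simp only [hf, hmdef, hrdef]; nlinarith
    · intro hs
      refine ⟨Real.arcsin ((s - m) / r), ?_, ?_⟩
      · have h1 : -1 < (s - m) / r := by
          rw [lt_div_iff₀ hr]; simp only [hmdef, hrdef]; nlinarith [hs.1]
        have h2 : (s - m) / r < 1 := by
          rw [div_lt_iff₀ hr]; simp only [hmdef, hrdef]; nlinarith [hs.2]
        exact ⟨Real.neg_pi_div_two_lt_arcsin.mpr h1, Real.arcsin_lt_pi_div_two.mpr h2⟩
      · simp only [hf]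
        rw [Real.sin_arcsin (by
          rw [le_div_iff₀ hr]; simp only [hmdef, hrdef]; nlinarith [hs.1]) (by
          rw [div_le_iff₀ hr]; simp only [hmdef, hrdef]; nlinarith [hs.2])]
        field_simp
        ring
  have hsub : Set.Ioo a b ⊆ Set.Icc a b := Set.Ioo_subset_Icc_self
  have hney : ∀ s ∈ Set.Icc a b, s - y ≠ 0 := by
    intro s hs h
    apply hy
    rw [show y = s by linarith]
    exact hs
  have eqn : ∀ θ ∈ Set.Ioo (-(π/2)) (π/2),
      (r * Real.cos θ) * g (f θ) = (m - y + r * Real.sin θ)⁻¹ := by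
    intro θ hθ
    have hcos : 0 < Real.cos θ := Real.cos_pos_of_mem_Ioo hθ
    have hfmem : f θ ∈ Set.Icc a b := hmapsIcc θ (Set.Ioo_subset_Icc_self hθ)
    have hne : f θ - y ≠ 0 := hney _ hfmem
    have hsqrt : Real.sqrt ((f θ - a) * (b - f θ)) = r * Real.cos θ := by
      have h2 : (f θ - a) * (b - f θ) = (r * Real.cos θ)^2 := by
        simp only [hf, hmdef, hrdef]
        linear_combination (-((b-a)/2)^2) * Real.sin_sq_add_cos_sq θ
      rw [h2, Real.sqrt_sq (by positivity)]
    have hfy : f θ - y = m - y + r * Real.sin θ := by simp only [hf]; ring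
    simp only [hg, hsqrt, hfy]
    rw [← hfy]
    field_simp
  have hcont2 : ContinuousOn (fun θ => (m - y + r * Real.sin θ)⁻¹)
      (Set.Icc (-(π/2)) (π/2)) := by
    apply ContinuousOn.inv₀
    · fun_prop
    · intro θ hθ
      have := hney _ (hmapsIcc θ hθ)
      simp only [hf] at this ⊢
      intro h; apply this; linarith
  have hmonof : StrictMonoOn f (Set.Icc (-(π/2)) (π/2)) := by
    intro x hx z hz hxz
    have := Real.strictMonoOn_sin hx hz hxz
    simp only [hf]
    nlinarith
  have hinj : Set.InjOn f (Set.Ioo (-(π/2)) (π/2)) :=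
    hmonof.injOn.mono Set.Ioo_subset_Icc_self
  have hintIoo : IntegrableOn g (Set.Ioo a b) := by
    rw [← himg, integrableOn_image_iff_integrableOn_abs_deriv_smul measurableSet_Ioo
      (fun x _ => (hfd x).hasDerivWithinAt) hinj]
    apply IntegrableOn.congr_fun
      ((hcont2.integrableOn_Icc).mono_set Set.Ioo_subset_Icc_self) _ measurableSet_Ioo
    intro θ hθ
    have hcos : 0 < Real.cos θ := Real.cos_pos_of_mem_Ioo hθ
    have := eqn θ hθ
    simp only [smul_eq_mul, abs_of_pos (by positivity : (0:ℝ) < r * Real.cos θ)]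
    exact this.symm
  have hgcont : ContinuousOn g (Set.Ioo a b) := by
    apply ContinuousOn.div continuousOn_const
    · exact ((Real.continuous_sqrt.comp (by fun_prop)).continuousOn).mul (by fun_prop)
    · intro s hs
      have h1 : 0 < (s - a) * (b - s) := mul_pos (by linarith [hs.1]) (by linarith [hs.2])
      exact mul_ne_zero (ne_of_gt (Real.sqrt_pos.mpr h1)) (hney s (hsub hs))
  have hminmax : min (-(π/2)) (π/2) = -(π/2) := min_eq_left (by linarith)
  have hminmax' : max (-(π/2)) (π/2) = π/2 := max_eq_right (by linarith)
  have huIcc : Set.uIcc (-(π/2)) (π/2) = Set.Icc (-(π/2)) (π/2) := Set.uIcc_of_le (by linarith)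
  have key := integral_comp_smul_deriv''' (f := f) (f' := fun θ => r * Real.cos θ) (g := g)
    (a := -(π/2)) (b := π/2)
    (by fun_prop)
    (by rw [hminmax, hminmax']; exact fun x _ => (hfd x).hasDerivWithinAt)
    (by rw [hminmax, hminmax', himg]; exact hgcont)
    (by
      rw [huIcc]
      refine IntegrableOn.mono_set ((integrableOn_Icc_iff_integrableOn_Ioo).mpr hintIoo) ?_
      intro u hu
      obtain ⟨θ, hθ, rfl⟩ := hu
      exact hmapsIcc θ hθ)
    (by
      rw [huIcc, integrableOn_Icc_iff_integrableOn_Ioo]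
      apply IntegrableOn.congr_fun
        ((hcont2.integrableOn_Icc).mono_set Set.Ioo_subset_Icc_self) _ measurableSet_Ioo
      intro θ hθ
      simpa using (eqn θ hθ).symm)
  rw [hfa, hfb] at key
  rw [← key]
  apply intervalIntegral.integral_congr_ae
  have hne : ∀ᵐ x : ℝ, x ≠ π/2 := by
    rw [MeasureTheory.ae_iff]
    convert Real.volume_singleton (a := π/2) using 2
    ext x; simp
  filter_upwards [hne] with θ hθ hmem
  rw [Set.uIoc_of_le (by linarith : -(π/2) ≤ π/2)] at hmem
  have hθIoo : θ ∈ Set.Ioo (-(π/2)) (π/2) := ⟨hmem.1, lt_of_le_of_ne hmem.2 hθ⟩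
  have := eqn θ hθIoo
  simpa using this



end PVAux

theorem pv_integral (a b y : ℝ) (hab : a < b) :
    (y < a → ∫ s in a..b, 1 / (Real.sqrt ((s - a) * (b - s)) * (s - y)) =
      Real.pi / Real.sqrt ((a - y) * (b - y))) ∧
    (b < y → ∫ s in a..b, 1 / (Real.sqrt ((s - a) * (b - s)) * (s - y)) =
      -(Real.pi / Real.sqrt ((y - a) * (y - b)))) := by
  constructor
  · intro hy
    have hy' : y ∉ Set.Icc a b := by simp [Set.mem_Icc]; intro h; linarith
    rw [subst_aux a b y hab hy']
    set c : ℝ := (a + b) / 2 - y with hcdef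
    set r : ℝ := (b - a) / 2 with hrdef
    have hr : 0 ≤ r := by simp [hrdef]; linarith
    have hcr : r < c := by simp [hcdef, hrdef]; linarith
    have hcr' : r < |c| := by rwa [abs_of_pos (lt_of_le_of_lt hr hcr)]
    rw [ftc_aux c r hr hcr',
      show ((a:ℝ) - y) * (b - y) = c^2 - r^2 by simp only [hcdef, hrdef]; ring]
    set K := Real.sqrt (c^2 - r^2) with hK
    have hsq : 0 < c^2 - r^2 := by nlinarith
    have hK0 : 0 < K := Real.sqrt_pos.mpr hsq
    have hKsq : K^2 = c^2 - r^2 := Real.sq_sqrt hsq.le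
    have hcrpos : 0 < c + r := by linarith
    have hx : 0 < (c + r) / K := div_pos hcrpos hK0
    have hinv : ((c + r) / K)⁻¹ = (c - r) / K := by
      rw [inv_div]
      rw [div_eq_div_iff (ne_of_gt hcrpos) (ne_of_gt hK0)]
      nlinarith [hKsq]
    have harc := Real.arctan_inv_of_pos hx
    rw [hinv] at harc
    rw [harc]
    ring
  · intro hy
    have hy' : y ∉ Set.Icc a b := by simp [Set.mem_Icc]; intro h; linarith
    rw [subst_aux a b y hab hy']
    set c : ℝ := (a + b) / 2 - y with hcdef
    set r : ℝ := (b - a) / 2 with hrdef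
    have hr : 0 ≤ r := by simp [hrdef]; linarith
    have hcr : c < -r := by simp [hcdef, hrdef]; linarith
    have hcr' : r < |c| := by
      rw [abs_of_neg (by linarith)]; linarith
    rw [ftc_aux c r hr hcr',
      show ((y:ℝ) - a) * (y - b) = c^2 - r^2 by simp only [hcdef, hrdef]; ring]
    set K := Real.sqrt (c^2 - r^2) with hK
    have hsq : 0 < c^2 - r^2 := by nlinarith
    have hK0 : 0 < K := Real.sqrt_pos.mpr hsq
    have hKsq : K^2 = c^2 - r^2 := Real.sq_sqrt hsq.le
    have hcrneg : c + r < 0 := by linarith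
    have hx : (c + r) / K < 0 := div_neg_of_neg_of_pos hcrneg hK0
    have hinv : ((c + r) / K)⁻¹ = (c - r) / K := by
      rw [inv_div]
      rw [div_eq_div_iff (ne_of_lt hcrneg) (ne_of_gt hK0)]
      nlinarith [hKsq]
    have harc := Real.arctan_inv_of_neg hx
    rw [hinv] at harc
    rw [harc]
    ring
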